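/- Let N = 2, x₀ ∈ ℝ², R₀ > 0 and G ≥ 0. Then there exist r₀ > max(R₀, 1) and α > 0, depending only on R₀ and G, with the following property: for every r ≥ r₀, if u is continuous on the closed annulus {x ∈ ℝ² : R₀ ≤ ‖x − x₀‖ ≤ r}, harmonic on the open annulus {x : R₀ < ‖x − x₀‖ < r}, satisfies u ≥ 0 on the closed annulus, u ≤ G on the inner circle {x : ‖x − x₀‖ = R₀}, and u = 0 on the outer circle {x : ‖x − x₀‖ = r}, then at every point x with ‖x − x₀‖ = r at which u is differentiable along the closed annulus, every such derivative p ∈ ℝ² satisfies ‖p‖² ≤ α / (r² (log r)²). -/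

import Mathlib

open Metric Set Filter Topology Asymptotics RealInnerProductSpace InnerProductSpace

noncomputable section
local notation "E2" => EuclideanSpace ℝ (Fin 2)

/-- The Laplacian of `f : ℝ^N → ℝ` at `x`, as the sum of the second partial
derivatives along the coordinate directions. -/
noncomputable def lapl {N : ℕ} (f : EuclideanSpace ℝ (Fin N) → ℝ)
    (x : EuclideanSpace ℝ (Fin N)) : ℝ :=
  ∑ i : Fin N,
    fderiv ℝ (fun y => fderiv ℝ f y (EuclideanSpace.single i 1)) x (EuclideanSpace.single i 1)

/-- `f` is harmonic on `Ω`: it is `C²` there and its Laplacian vanishes on `Ω`. -/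
def IsHarmonicOn {N : ℕ} (f : EuclideanSpace ℝ (Fin N) → ℝ)
    (Ω : Set (EuclideanSpace ℝ (Fin N))) : Prop :=
  ContDiffOn ℝ 2 f Ω ∧ ∀ x ∈ Ω, lapl f x = 0

def qf (a y : E2) : ℝ := ⟪y - a, y - a⟫

lemma qf_eq_norm (a y : E2) : qf a y = ‖y - a‖^2 := real_inner_self_eq_norm_sq _

lemma qf_coords (a y : E2) : qf a y = (y 0 - a 0) * (y 0 - a 0) + (y 1 - a 1) * (y 1 - a 1) := by
  have : qf a y = ∑ i : Fin 2, (y i - a i) * (y i - a i) := by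
    simp only [qf, PiLp.inner_apply, RCLike.inner_apply]
    simp
  rw [this, Fin.sum_univ_two]

lemma hasFDerivAt_qf (a y : E2) : HasFDerivAt (qf a) ((2:ℝ) • innerSL ℝ (y - a)) y := by
  have h : HasFDerivAt (qf a) (fderivInnerCLM ℝ (y - a, y - a) ∘L ((ContinuousLinearMap.id ℝ E2).prod (ContinuousLinearMap.id ℝ E2))) y := ((hasFDerivAt_id y).sub_const a).inner ℝ ((hasFDerivAt_id y).sub_const a)
  refine h.congr_fderiv ?_
  ext v
  simp [fderivInnerCLM_apply, real_inner_comm, two_smul, qf]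
  rw [inner_sub_right, real_inner_comm v y, real_inner_comm v a]

lemma qf_cont (a : E2) : Continuous (qf a) := by
  exact Continuous.inner (continuous_id.sub continuous_const) (continuous_id.sub continuous_const)

lemma isOpen_qf_ne (a : E2) : IsOpen {y : E2 | qf a y ≠ 0} :=
  isOpen_compl_singleton.preimage (qf_cont a)

lemma barrier_hasFDerivAt (a : E2) (c₁ c₂ ε : ℝ) {y : E2} (hy : qf a y ≠ 0) :
    HasFDerivAt (fun y => c₁ + (c₂ * Real.log (qf a y) + ε * qf a y))
      (c₂ • ((qf a y)⁻¹ • ((2:ℝ) • innerSL ℝ (y - a))) + ε • ((2:ℝ) • innerSL ℝ (y - a))) y := by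
  have h1 := (Real.hasDerivAt_log hy).comp_hasFDerivAt y (hasFDerivAt_qf a y)
  exact ((h1.const_mul c₂).add ((hasFDerivAt_qf a y).const_mul ε)).const_add c₁

lemma barrier_partial (a : E2) (c₁ c₂ ε : ℝ) (i : Fin 2) {y : E2} (hy : qf a y ≠ 0) :
    fderiv ℝ (fun y => c₁ + (c₂ * Real.log (qf a y) + ε * qf a y)) y (EuclideanSpace.single i 1)
      = (c₂ * (qf a y)⁻¹ + ε) * (2 * (y i - a i)) := by
  rw [(barrier_hasFDerivAt a c₁ c₂ ε hy).fderiv]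
  have h2 : ⟪y - a, EuclideanSpace.single i (1:ℝ)⟫ = y i - a i := by
    rw [EuclideanSpace.inner_single_right]; simp
  simp only [ContinuousLinearMap.add_apply, ContinuousLinearMap.smul_apply, innerSL_apply_apply, h2,
    smul_eq_mul]
  ring

lemma lapl_barrier (a : E2) (c₁ c₂ ε : ℝ) {z : E2} (hz : qf a z ≠ 0) :
    lapl (fun y => c₁ + (c₂ * Real.log (qf a y) + ε * qf a y)) z = 4 * ε := by
  have key : ∀ i : Fin 2,
      fderiv ℝ (fun y => fderiv ℝ (fun y => c₁ + (c₂ * Real.log (qf a y) + ε * qf a y)) y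
        (EuclideanSpace.single i 1)) z (EuclideanSpace.single i 1)
      = (c₂ * (qf a z)⁻¹ + ε) * 2
        + (2 * (z i - a i)) * (c₂ * (-((qf a z)^2)⁻¹ * (2 * (z i - a i)))) := by
    intro i
    have hev : (fun y => fderiv ℝ (fun y => c₁ + (c₂ * Real.log (qf a y) + ε * qf a y)) y
        (EuclideanSpace.single i 1))
        =ᶠ[𝓝 z] (fun y => (c₂ * (qf a y)⁻¹ + ε) * (2 * (y i - a i))) := by
      filter_upwards [(isOpen_qf_ne a).mem_nhds hz] with y hy using barrier_partial a c₁ c₂ ε i hy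
    rw [hev.fderiv_eq]
    have hinv := (hasDerivAt_inv hz).comp_hasFDerivAt z (hasFDerivAt_qf a z)
    have hA : HasFDerivAt (fun y => c₂ * (qf a y)⁻¹ + ε)
        (c₂ • ((-((qf a z)^2)⁻¹) • ((2:ℝ) • innerSL ℝ (z - a)))) z :=
      (hinv.const_mul c₂).add_const ε
    have hB : HasFDerivAt (fun y : E2 => 2 * (y i - a i))
        ((2:ℝ) • ((EuclideanSpace.proj i : E2 →L[ℝ] ℝ))) z := by
      exact (((EuclideanSpace.proj i : E2 →L[ℝ] ℝ).hasFDerivAt).sub_const (a i)).const_mul 2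
    have hAB := hA.fun_mul hB
    rw [hAB.fderiv]
    have h1 : ⟪z - a, EuclideanSpace.single i (1:ℝ)⟫ = z i - a i := by
      rw [EuclideanSpace.inner_single_right]; simp
    have h3 : (EuclideanSpace.proj i : E2 →L[ℝ] ℝ) (EuclideanSpace.single i 1) = 1 := by
      simp [EuclideanSpace.single_apply]
    simp only [ContinuousLinearMap.add_apply, ContinuousLinearMap.smul_apply, innerSL_apply_apply, h1,
      h3, smul_eq_mul]
    ring
  unfold lapl
  rw [Fin.sum_univ_two, key 0, key 1]
  have hq := qf_coords a z
  have h0 : (z 0 - a 0) * (z 0 - a 0) + (z 1 - a 1) * (z 1 - a 1) ≠ 0 := by rw [← hq]; exact hz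
  field_simp
  rw [hq]
  ring

lemma eventually_contDiffAt {f : E2 → ℝ} {z : E2} (hf : ContDiffAt ℝ 2 f z) :
    ∀ᶠ y in 𝓝 z, ContDiffAt ℝ 2 f y := hf.eventually (by simp)

lemma diffAt_fderiv_apply {f : E2 → ℝ} {z : E2} (hf : ContDiffAt ℝ 2 f z) (e : E2) :
    DifferentiableAt ℝ (fun y => fderiv ℝ f y e) z := by
  have h1 : ContDiffAt ℝ 1 (fderiv ℝ f) z := hf.fderiv_right (by norm_num)
  exact (h1.differentiableAt one_ne_zero).clm_apply (differentiableAt_const e)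

lemma lapl_add {f g : E2 → ℝ} {z : E2} (hf : ContDiffAt ℝ 2 f z) (hg : ContDiffAt ℝ 2 g z) :
    lapl (fun y => f y + g y) z = lapl f z + lapl g z := by
  unfold lapl
  rw [← Finset.sum_add_distrib]
  refine Finset.sum_congr rfl fun i _ => ?_
  have hev : (fun y => fderiv ℝ (fun y => f y + g y) y (EuclideanSpace.single i 1)) =ᶠ[𝓝 z]
      (fun y => fderiv ℝ f y (EuclideanSpace.single i 1)
        + fderiv ℝ g y (EuclideanSpace.single i 1)) := by
    filter_upwards [eventually_contDiffAt hf, eventually_contDiffAt hg] with y h1 h2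
    rw [fderiv_fun_add (h1.differentiableAt two_ne_zero) (h2.differentiableAt two_ne_zero)]
    rfl
  rw [hev.fderiv_eq,
    fderiv_fun_add (diffAt_fderiv_apply hf _) (diffAt_fderiv_apply hg _)]
  rfl

lemma dir_nonpos {f : E2 → ℝ} {z : E2} (hf : ∀ᶠ y in 𝓝 z, ContDiffAt ℝ 2 f y)
    (hmax : IsLocalMax f z) (i : Fin 2) :
    fderiv ℝ (fun y => fderiv ℝ f y (EuclideanSpace.single i 1)) z
      (EuclideanSpace.single i 1) ≤ 0 := by
  set v : E2 := EuclideanSpace.single i 1 with hv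
  have hnv : ‖v‖ = 1 := by simp [hv]
  obtain ⟨δ, hδpos, hball⟩ : ∃ δ > 0, ∀ y ∈ Metric.ball z δ, ContDiffAt ℝ 2 f y ∧ f y ≤ f z :=
    Metric.eventually_nhds_iff_ball.mp (hf.and hmax)
  have hmem : ∀ t : ℝ, |t| < δ → z + t • v ∈ Metric.ball z δ := by
    intro t ht
    simp only [Metric.mem_ball, dist_eq_norm, add_sub_cancel_left, norm_smul, hnv,
      Real.norm_eq_abs, mul_one]
    exact ht
  set D : E2 → ℝ := fun y => fderiv ℝ f y v with hD
  have hline : ∀ t : ℝ, HasDerivAt (fun s : ℝ => z + s • v) v t := by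
    intro t
    simpa using ((hasDerivAt_id t).smul_const v).const_add z
  have hg : ∀ t : ℝ, |t| < δ → HasDerivAt (fun s => f (z + s • v)) (D (z + t • v)) t := by
    intro t ht
    have hd : DifferentiableAt ℝ f (z + t • v) := (hball _ (hmem t ht)).1.differentiableAt two_ne_zero
    exact hd.hasFDerivAt.comp_hasDerivAt t (hline t)
  have hfz : ContDiffAt ℝ 2 f z := hf.self_of_nhds
  have hg1 : HasDerivAt (fun t : ℝ => D (z + t • v)) (fderiv ℝ D z v) 0 := by
    have h0 : z + (0:ℝ) • v = z := by simp
    have h := (diffAt_fderiv_apply hfz v).hasFDerivAt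
    rw [← h0] at h
    have := h.comp_hasDerivAt 0 (hline 0)
    rw [h0] at this
    exact this
  have hgmax : IsLocalMax (fun s : ℝ => f (z + s • v)) 0 := by
    have hcont : Filter.Tendsto (fun s : ℝ => z + s • v) (𝓝 0) (𝓝 z) := by
      have : Continuous (fun s : ℝ => z + s • v) :=
        continuous_const.add (continuous_id.smul continuous_const)
      simpa using this.tendsto 0
    have h2 := hcont.eventually hmax
    simpa [IsLocalMax, IsMaxFilter] using h2
  have hD0 : D z = 0 := by
    have h1 : deriv (fun s : ℝ => f (z + s • v)) 0 = 0 := hgmax.deriv_eq_zero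
    have h2 := (hg (0:ℝ) (by simpa using hδpos)).deriv
    rw [h1] at h2
    simpa using h2.symm
  by_contra hL
  push_neg at hL
  have hslope : Filter.Tendsto (fun t => D (z + t • v) / t) (𝓝[>] 0) (𝓝 (fderiv ℝ D z v)) := by
    have h2 := (hasDerivAt_iff_tendsto_slope.mp hg1).mono_left
      (nhdsWithin_mono _ (fun t (ht : t ∈ Set.Ioi (0:ℝ)) => ne_of_gt ht))
    have h3 : slope (fun t : ℝ => D (z + t • v)) 0 = fun t => D (z + t • v) / t := by
      funext t
      simp [slope_def_field, hD0]
    rwa [h3] at h2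
  have hpos : ∀ᶠ t in 𝓝[>] (0:ℝ), 0 < D (z + t • v) := by
    have h1 : ∀ᶠ x in 𝓝 (fderiv ℝ D z v), 0 < x := eventually_gt_nhds hL
    filter_upwards [hslope.eventually h1, self_mem_nhdsWithin] with t h2 (h3 : (0:ℝ) < t)
    have h4 := mul_pos h2 h3
    rwa [div_mul_cancel₀] at h4
    exact ne_of_gt h3
  obtain ⟨u, hu, hsub⟩ := mem_nhdsGT_iff_exists_Ioo_subset.mp hpos
  have hu0 : 0 < u := hu
  set t₀ : ℝ := min u δ / 2 with ht₀
  have ht₀pos : 0 < t₀ := by positivity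
  have ht₀u : t₀ < u := by
    have : min u δ ≤ u := min_le_left u δ
    nlinarith
  have ht₀δ : t₀ < δ := by
    have : min u δ ≤ δ := min_le_right u δ
    nlinarith
  have habs : ∀ s ∈ Set.Icc (0:ℝ) t₀, |s| < δ := by
    intro s hs
    rw [abs_of_nonneg hs.1]
    linarith [hs.2]
  have hcont : ContinuousOn (fun s : ℝ => f (z + s • v)) (Set.Icc 0 t₀) := fun s hs =>
    ((hg s (habs s hs)).continuousAt).continuousWithinAt
  obtain ⟨ξ, hξ, hξeq⟩ := exists_hasDerivAt_eq_slope (fun s : ℝ => f (z + s • v))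
    (fun s => D (z + s • v)) ht₀pos hcont
    (fun s hs => hg s (habs s ⟨le_of_lt hs.1, le_of_lt hs.2⟩))
  have hle : f (z + t₀ • v) ≤ f z := (hball _ (hmem t₀ (habs t₀ ⟨le_of_lt ht₀pos, le_refl _⟩))).2
  have h5 : f (z + (0:ℝ) • v) = f z := by simp
  have h6 : D (z + ξ • v) ≤ 0 := by
    rw [hξeq, h5]
    apply div_nonpos_of_nonpos_of_nonneg <;> linarith
  have h7 : 0 < D (z + ξ • v) := hsub ⟨hξ.1, lt_trans hξ.2 ht₀u⟩
  linarith

lemma comparison (a : E2) {R₀ r : ℝ} (hR₀ : 0 < R₀) (hr : R₀ < r) (c₁ c₂ : ℝ)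
    (u : E2 → ℝ)
    (hu : ContinuousOn u {x : E2 | R₀ ≤ ‖x - a‖ ∧ ‖x - a‖ ≤ r})
    (hharm : IsHarmonicOn u {x : E2 | R₀ < ‖x - a‖ ∧ ‖x - a‖ < r})
    (hbd : ∀ y : E2, ‖y - a‖ = R₀ ∨ ‖y - a‖ = r → u y ≤ c₁ + c₂ * Real.log (qf a y)) :
    ∀ y : E2, R₀ ≤ ‖y - a‖ → ‖y - a‖ ≤ r → u y ≤ c₁ + c₂ * Real.log (qf a y) := by
  set K : Set E2 := {x : E2 | R₀ ≤ ‖x - a‖ ∧ ‖x - a‖ ≤ r} with hK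
  set A : Set E2 := {x : E2 | R₀ < ‖x - a‖ ∧ ‖x - a‖ < r} with hA
  have hAopen : IsOpen A := by
    have : A = (fun x : E2 => ‖x - a‖) ⁻¹' Set.Ioo R₀ r := rfl
    rw [this]
    exact isOpen_Ioo.preimage (continuous_id.sub continuous_const).norm
  have hAK : A ⊆ K := fun x hx => ⟨le_of_lt hx.1, le_of_lt hx.2⟩
  have hKclosed : IsClosed K := by
    have : K = (fun x : E2 => ‖x - a‖) ⁻¹' Set.Icc R₀ r := rfl
    rw [this]
    exact isClosed_Icc.preimage (continuous_id.sub continuous_const).norm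
  have hKcomp : IsCompact K := by
    refine (isCompact_closedBall a r).of_isClosed_subset hKclosed ?_
    intro x hx
    rw [Metric.mem_closedBall, dist_eq_norm]
    exact hx.2
  have hKne : K.Nonempty := by
    refine ⟨a + R₀ • EuclideanSpace.single 0 1, ?_, ?_⟩ <;>
      simp [norm_smul, abs_of_pos hR₀] <;> linarith
  have hqne : ∀ y ∈ K, qf a y ≠ 0 := by
    intro y hy
    rw [qf_eq_norm]
    have h0 : 0 < ‖y - a‖ := lt_of_lt_of_le hR₀ hy.1
    exact (pow_pos h0 2).ne'
  set b : E2 → ℝ := fun y => c₁ + c₂ * Real.log (qf a y) with hb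
  intro y hy1 hy2
  have hyK : y ∈ K := ⟨hy1, hy2⟩
  have hr0 : 0 < r := lt_trans hR₀ hr
  have main : ∀ ε : ℝ, 0 < ε → u y - b y ≤ ε * r ^ 2 := by
    intro ε hε
    set h : E2 → ℝ := fun y => (-c₁) + ((-c₂) * Real.log (qf a y) + ε * qf a y) with hh
    set w : E2 → ℝ := fun y => u y + h y with hw
    have hwcont : ContinuousOn w K := by
      refine hu.add ?_
      refine continuousOn_const.add (ContinuousOn.add ?_ ((continuous_const.mul (qf_cont a)).continuousOn))
      refine continuousOn_const.mul ?_
      intro y hy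
      exact ((Real.continuousAt_log (hqne y hy)).comp (qf_cont a).continuousAt).continuousWithinAt
    obtain ⟨z, hzK, hzmax⟩ := hKcomp.exists_isMaxOn hKne hwcont
    have hwz : w z ≤ ε * r ^ 2 := by
      by_cases hzA : z ∈ A
      · exfalso
        have hCD : ∀ x ∈ A, ContDiffAt ℝ 2 w x := by
          intro x hx
          have hqx : qf a x ≠ 0 := hqne x (hAK hx)
          have hcu : ContDiffAt ℝ 2 u x := hharm.1.contDiffAt (hAopen.mem_nhds hx)
          have hq : ContDiffAt ℝ 2 (qf a) x :=
            ((contDiff_id.sub contDiff_const).inner ℝ (contDiff_id.sub contDiff_const)).contDiffAt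
          have hch : ContDiffAt ℝ 2 h x := by
            refine contDiffAt_const.add (ContDiffAt.add ?_ (contDiffAt_const.mul hq))
            exact contDiffAt_const.mul ((Real.contDiffAt_log.mpr hqx).comp x hq)
          exact hcu.add hch
        have hlw : lapl w z = 4 * ε := by
          have h1 : lapl w z = lapl u z + lapl h z :=
            lapl_add (hharm.1.contDiffAt (hAopen.mem_nhds hzA))
              (by
                have hqx : qf a z ≠ 0 := hqne z (hAK hzA)
                have hq : ContDiffAt ℝ 2 (qf a) z :=
                  ((contDiff_id.sub contDiff_const).inner ℝ (contDiff_id.sub contDiff_const)).contDiffAt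
                refine contDiffAt_const.add (ContDiffAt.add ?_ (contDiffAt_const.mul hq))
                exact contDiffAt_const.mul ((Real.contDiffAt_log.mpr hqx).comp z hq))
          rw [h1, hharm.2 z hzA, lapl_barrier a (-c₁) (-c₂) ε (hqne z (hAK hzA))]
          ring
        have hmax' : IsLocalMax w z := by
          filter_upwards [hAopen.mem_nhds hzA] with x hx using hzmax (hAK hx)
        have hev : ∀ᶠ x in 𝓝 z, ContDiffAt ℝ 2 w x := by
          filter_upwards [hAopen.mem_nhds hzA] with x hx using hCD x hx
        have hle : lapl w z ≤ 0 := by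
          unfold lapl
          exact Finset.sum_nonpos fun i _ => dir_nonpos hev hmax' i
        rw [hlw] at hle
        linarith
      · have hbdz : ‖z - a‖ = R₀ ∨ ‖z - a‖ = r := by
          rcases hzK with ⟨h1, h2⟩
          rcases eq_or_lt_of_le h1 with h3 | h3
          · exact Or.inl h3.symm
          rcases eq_or_lt_of_le h2 with h4 | h4
          · exact Or.inr h4
          exact absurd ⟨h3, h4⟩ hzA
        have huz : u z ≤ b z := hbd z hbdz
        have hq1 : qf a z ≤ r ^ 2 := by
          rw [qf_eq_norm]
          exact pow_le_pow_left₀ (norm_nonneg _) hzK.2 2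
        have : w z = u z - b z + ε * qf a z := by
          simp only [hw, hh, hb]
          ring
        rw [this]
        nlinarith [mul_pos hε (pow_pos hr0 2)]
    have h2 : w y ≤ w z := hzmax hyK
    have h3 : 0 ≤ qf a y := by rw [qf_eq_norm]; positivity
    have h4 : w y = u y - b y + ε * qf a y := by
      simp only [hw, hh, hb]
      ring
    nlinarith
  by_contra hcon
  push_neg at hcon
  have hcon' : b y < u y := hcon
  set η := (u y - b y) / (2 * r ^ 2) with hη
  have hηpos : 0 < η := div_pos (by linarith) (by positivity)
  have h9 := main η hηpos
  rw [hη] at h9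
  have hr2 : (0:ℝ) < r ^ 2 := by positivity
  rw [div_mul_eq_mul_div, mul_comm (2:ℝ) (r^2), ← div_div, mul_div_assoc] at h9
  rw [div_self (ne_of_gt hr2), mul_one] at h9
  linarith

open InnerProductSpace in
lemma ray_bound (a : E2) {R₀ r c₁ c₂ : ℝ} (hR₀ : 0 < R₀) (hr : R₀ < r) {x : E2}
    (hx : ‖x - a‖ = r) {u : E2 → ℝ} {p : E2}
    (hp : HasGradientWithinAt u p {y : E2 | R₀ ≤ ‖y - a‖ ∧ ‖y - a‖ ≤ r} x)
    (hux : u x = 0)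
    (h0 : ∀ y : E2, R₀ ≤ ‖y - a‖ → ‖y - a‖ ≤ r → 0 ≤ u y)
    (hub : ∀ y : E2, R₀ ≤ ‖y - a‖ → ‖y - a‖ ≤ r → u y ≤ c₁ + c₂ * Real.log (qf a y))
    (hbx : c₁ + c₂ * Real.log (qf a x) = 0)
    (v : E2) (hv : ⟪x - a, v⟫ < 0) :
    0 ≤ ⟪p, v⟫ ∧ ⟪p, v⟫ ≤ c₂ * (2 * ⟪x - a, v⟫ / qf a x) := by
  set K : Set E2 := {y : E2 | R₀ ≤ ‖y - a‖ ∧ ‖y - a‖ ≤ r} with hK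
  have hr0 : 0 < r := lt_trans hR₀ hr
  have hqx : qf a x = r ^ 2 := by rw [qf_eq_norm, hx]
  have hqxne : qf a x ≠ 0 := by rw [hqx]; positivity
  set c : ℝ := -⟪x - a, v⟫ with hc
  have hcpos : 0 < c := by rw [hc]; linarith
  -- the quadratic expansion
  have hqexp : ∀ t : ℝ, qf a (x + t • v) = r ^ 2 - 2 * t * c + t ^ 2 * ‖v‖ ^ 2 := by
    intro t
    have h1 : x + t • v - a = (x - a) + t • v := by abel
    rw [qf, h1, real_inner_add_add_self, real_inner_smul_right, real_inner_smul_left,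
      real_inner_smul_right, real_inner_self_eq_norm_sq, real_inner_self_eq_norm_sq, hx]
    ring
  -- membership of the ray in K
  set δ : ℝ := min (c / (‖v‖ ^ 2 + 1)) ((r ^ 2 - R₀ ^ 2) / (2 * c)) with hδ
  have hδpos : 0 < δ := by
    apply lt_min
    · positivity
    · apply div_pos
      · nlinarith
      · positivity
  have hmem : ∀ t ∈ Set.Ioo (0:ℝ) δ, x + t • v ∈ K := by
    intro t ht
    have ht1 : 0 < t := ht.1
    have ht2 : t < c / (‖v‖ ^ 2 + 1) := lt_of_lt_of_le ht.2 (min_le_left _ _)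
    have ht3 : t < (r ^ 2 - R₀ ^ 2) / (2 * c) := lt_of_lt_of_le ht.2 (min_le_right _ _)
    have hv2 : (0:ℝ) ≤ ‖v‖ ^ 2 := by positivity
    have h4 : t * (‖v‖ ^ 2 + 1) < c := (lt_div_iff₀ (by positivity)).mp ht2
    have h5 : 2 * c * t < r ^ 2 - R₀ ^ 2 := by
      rw [lt_div_iff₀ (by positivity)] at ht3
      linarith
    have hup : qf a (x + t • v) ≤ r ^ 2 := by
      rw [hqexp t]
      nlinarith
    have hdown : R₀ ^ 2 ≤ qf a (x + t • v) := by
      rw [hqexp t]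
      nlinarith
    have hn0 : 0 ≤ ‖x + t • v - a‖ := norm_nonneg _
    have hqn : qf a (x + t • v) = ‖x + t • v - a‖ ^ 2 := qf_eq_norm a _
    rw [hqn] at hup hdown
    constructor
    · nlinarith
    · nlinarith
  -- limit of u along the ray
  set l : Filter ℝ := 𝓝[>] (0:ℝ) with hl
  have hIoo : Set.Ioo (0:ℝ) δ ∈ l := Ioo_mem_nhdsGT_of_mem ⟨le_refl 0, hδpos⟩
  have hmap : Filter.Tendsto (fun t : ℝ => x + t • v) l (𝓝[K] x) := by
    rw [tendsto_nhdsWithin_iff]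
    constructor
    · have hcont : Continuous (fun t : ℝ => x + t • v) :=
        continuous_const.add (continuous_id.smul continuous_const)
      have := hcont.tendsto 0
      simp only [zero_smul, add_zero] at this
      exact this.mono_left nhdsWithin_le_nhds
    · filter_upwards [hIoo] with t ht using hmem t ht
  have hlittle := (hasFDerivWithinAt_iff_isLittleO.mp hp).comp_tendsto hmap
  have h2 : (fun t : ℝ => u (x + t • v) - t * ⟪p, v⟫) =o[l] (fun t : ℝ => t) := by
    have hbig : (fun t : ℝ => (x + t • v) - x) =O[l] (fun t : ℝ => t) := by
      apply Asymptotics.IsBigO.of_bound ‖v‖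
      filter_upwards with t
      simp only [add_sub_cancel_left, norm_smul, Real.norm_eq_abs]
      rw [mul_comm]
    have := hlittle.trans_isBigO hbig
    have heq : (fun t : ℝ => u (x + t • v) - u x - (toDual ℝ E2 p) ((x + t • v) - x))
        = fun t : ℝ => u (x + t • v) - t * ⟪p, v⟫ := by
      funext t
      rw [hux]
      simp only [add_sub_cancel_left, toDual_apply_apply, real_inner_smul_right]
      ring
    rw [← heq]
    exact this
  have h4 : Filter.Tendsto (fun t : ℝ => (u (x + t • v) - t * ⟪p, v⟫) / t) l (𝓝 0) := by
    rw [← Asymptotics.isLittleO_iff_tendsto']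
    · exact h2
    · filter_upwards [self_mem_nhdsWithin] with t (ht : (0:ℝ) < t) h
      exact absurd h (ne_of_gt ht)
  have h5 : Filter.Tendsto (fun t : ℝ => u (x + t • v) / t) l (𝓝 ⟪p, v⟫) := by
    have h6 := h4.add_const ⟪p, v⟫
    rw [zero_add] at h6
    apply h6.congr'
    filter_upwards [self_mem_nhdsWithin] with t (ht : (0:ℝ) < t)
    field_simp
    ring
  -- limit of the barrier along the ray
  set L0 : ℝ := c₂ * (2 * ⟪x - a, v⟫ / qf a x) with hL0
  set β : ℝ → ℝ := fun t => c₁ + c₂ * Real.log (qf a (x + t • v)) with hβdef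
  have hq0 : x + (0:ℝ) • v = x := by simp
  have hβ : HasDerivAt β L0 0 := by
    have hline : HasDerivAt (fun t : ℝ => x + t • v) v 0 := by
      simpa using ((hasDerivAt_id (0:ℝ)).smul_const v).const_add x
    have hf := hasFDerivAt_qf a x
    rw [← hq0] at hf
    have hqd' := hf.comp_hasDerivAt (0:ℝ) hline
    have hqd : HasDerivAt (fun t : ℝ => qf a (x + t • v)) (2 * ⟪x - a, v⟫) 0 := by
      rw [hq0] at hqd'
      refine hqd'.congr_deriv ?_
      simp only [ContinuousLinearMap.smul_apply, innerSL_apply_apply, smul_eq_mul]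
    have hq0' : qf a (x + (0:ℝ) • v) = qf a x := by rw [hq0]
    have hlog := hqd.log (by rw [hq0']; exact hqxne)
    have hfin := (hlog.const_mul c₂).const_add c₁
    rw [hq0'] at hfin
    exact hfin
  have hβ0 : β 0 = 0 := by
    rw [hβdef]
    simp only [hq0]
    exact hbx
  have hβslope : Filter.Tendsto (fun t : ℝ => β t / t) l (𝓝 L0) := by
    have h2 := (hasDerivAt_iff_tendsto_slope.mp hβ).mono_left
      (nhdsWithin_mono _ (fun t (ht : t ∈ Set.Ioi (0:ℝ)) => ne_of_gt ht))
    have h3 : slope β 0 = fun t => β t / t := by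
      funext t
      simp [slope_def_field, hβ0]
    rwa [h3] at h2
  constructor
  · refine ge_of_tendsto h5 ?_
    filter_upwards [hIoo] with t ht
    have hm := hmem t ht
    exact div_nonneg (h0 _ hm.1 hm.2) (le_of_lt ht.1)
  · refine le_of_tendsto_of_tendsto h5 hβslope ?_
    filter_upwards [hIoo] with t ht
    have hm := hmem t ht
    have hub' : u (x + t • v) ≤ β t := hub _ hm.1 hm.2
    exact (div_le_div_iff_of_pos_right ht.1).mpr hub'

open InnerProductSpace in
lemma ray_bound' (a : E2) {R₀ r c₁ c₂ : ℝ} (hR₀ : 0 < R₀) (hr : R₀ < r) {x : E2}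
    (hx : ‖x - a‖ = r) {u : E2 → ℝ} {p : E2}
    (hp : HasGradientWithinAt u p {y : E2 | R₀ ≤ ‖y - a‖ ∧ ‖y - a‖ ≤ r} x)
    (hux : u x = 0)
    (h0 : ∀ y : E2, R₀ ≤ ‖y - a‖ → ‖y - a‖ ≤ r → 0 ≤ u y)
    (hub : ∀ y : E2, R₀ ≤ ‖y - a‖ → ‖y - a‖ ≤ r → u y ≤ c₁ + c₂ * Real.log (qf a y))
    (hbx : c₁ + c₂ * Real.log (qf a x) = 0)
    (v : E2) (hv : ⟪x - a, v⟫ ≤ 0) :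
    0 ≤ ⟪p, v⟫ ∧ ⟪p, v⟫ ≤ c₂ * (2 * ⟪x - a, v⟫ / qf a x) := by
  have hr0 : 0 < r := lt_trans hR₀ hr
  have hqx : qf a x = r ^ 2 := by rw [qf_eq_norm, hx]
  set M : ℝ := ⟪p, x - a⟫ with hM
  have key : ∀ ε : ℝ, 0 < ε →
      ε * M ≤ ⟪p, v⟫ ∧ ⟪p, v⟫ ≤ c₂ * (2 * (⟪x - a, v⟫ - ε * r ^ 2) / qf a x) + ε * M := by
    intro ε hε
    have hvε : ⟪x - a, v - ε • (x - a)⟫ < 0 := by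
      rw [inner_sub_right, real_inner_smul_right, real_inner_self_eq_norm_sq, hx]
      nlinarith [mul_pos hε (pow_pos hr0 2)]
    have hsub : ⟪x - a, v - ε • (x - a)⟫ = ⟪x - a, v⟫ - ε * r ^ 2 := by
      rw [inner_sub_right, real_inner_smul_right, real_inner_self_eq_norm_sq, hx]
    have hpv : ⟪p, v - ε • (x - a)⟫ = ⟪p, v⟫ - ε * M := by
      rw [inner_sub_right, real_inner_smul_right, hM]
    obtain ⟨hA, hB⟩ := ray_bound a hR₀ hr hx hp hux h0 hub hbx _ hvε
    rw [hpv] at hA hB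
    rw [hsub] at hB
    exact ⟨by linarith, by linarith⟩
  have htend : Filter.Tendsto (fun ε : ℝ => ε * M) (𝓝[>] 0) (𝓝 0) := by
    have : Filter.Tendsto (fun ε : ℝ => ε * M) (𝓝 0) (𝓝 0) := by
      simpa using (continuous_mul_right M).tendsto (0:ℝ)
    exact this.mono_left nhdsWithin_le_nhds
  constructor
  · refine le_of_tendsto htend ?_
    filter_upwards [self_mem_nhdsWithin] with ε (hε : (0:ℝ) < ε) using (key ε hε).1
  · have htend2 : Filter.Tendsto
        (fun ε : ℝ => c₂ * (2 * (⟪x - a, v⟫ - ε * r ^ 2) / qf a x) + ε * M) (𝓝[>] 0)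
        (𝓝 (c₂ * (2 * ⟪x - a, v⟫ / qf a x))) := by
      have hcont : Continuous
          (fun ε : ℝ => c₂ * (2 * (⟪x - a, v⟫ - ε * r ^ 2) / qf a x) + ε * M) := by
        fun_prop
      have := hcont.tendsto (0:ℝ)
      simp only [mul_zero, zero_mul, sub_zero, add_zero] at this
      exact this.mono_left nhdsWithin_le_nhds
    refine ge_of_tendsto htend2 ?_
    filter_upwards [self_mem_nhdsWithin] with ε (hε : (0:ℝ) < ε) using (key ε hε).2

theorem stmt1 (x₀ : EuclideanSpace ℝ (Fin 2))
    (R₀ G : ℝ) (hR₀ : 0 < R₀) (hG : 0 ≤ G) :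
    ∃ r₀ > max R₀ 1, ∃ α > 0, ∀ r, r₀ ≤ r →
      ∀ u : EuclideanSpace ℝ (Fin 2) → ℝ,
        ContinuousOn u {x | R₀ ≤ ‖x - x₀‖ ∧ ‖x - x₀‖ ≤ r} →
        IsHarmonicOn u {x | R₀ < ‖x - x₀‖ ∧ ‖x - x₀‖ < r} →
        (∀ x, R₀ ≤ ‖x - x₀‖ → ‖x - x₀‖ ≤ r → 0 ≤ u x) →
        (∀ x, ‖x - x₀‖ = R₀ → u x ≤ G) →
        (∀ x, ‖x - x₀‖ = r → u x = 0) →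
        ∀ x, ‖x - x₀‖ = r →
          ∀ p : EuclideanSpace ℝ (Fin 2),
            HasGradientWithinAt u p {x | R₀ ≤ ‖x - x₀‖ ∧ ‖x - x₀‖ ≤ r} x →
            ‖p‖ ^ 2 ≤ α / (r ^ 2 * Real.log r ^ 2) := by
  refine ⟨R₀ ^ 2 + 2, ?_, 4 * G ^ 2 + 1, by positivity, ?_⟩
  · rw [gt_iff_lt, max_lt_iff]
    constructor <;> nlinarith
  intro r hr u hcont hharm h0 hin hout x hx p hp
  set a := x₀
  have hrR : R₀ < r := by nlinarith
  have hr2 : (2:ℝ) ≤ r := by nlinarith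
  have hr0 : 0 < r := by linarith
  have hlogr : 0 < Real.log r := Real.log_pos (by linarith)
  have hloghalf : Real.log R₀ ≤ Real.log r / 2 := by
    rcases le_or_gt R₀ 1 with h | h
    · have := Real.log_nonpos (le_of_lt hR₀) h
      linarith
    · have h1 : R₀ ^ 2 ≤ r := by nlinarith
      have h2 : Real.log (R₀ ^ 2) ≤ Real.log r := Real.log_le_log (by positivity) h1
      rw [Real.log_pow] at h2
      push_cast at h2
      linarith
  have hden : 0 < Real.log r - Real.log R₀ := by linarith
  set C : ℝ := G / (Real.log r - Real.log R₀) with hC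
  have hCpos : 0 ≤ C := div_nonneg hG (le_of_lt hden)
  set c₁ : ℝ := C * Real.log r with hc₁
  set c₂ : ℝ := -(C / 2) with hc₂
  -- the comparison principle
  have hbd : ∀ y : E2, ‖y - a‖ = R₀ ∨ ‖y - a‖ = r → u y ≤ c₁ + c₂ * Real.log (qf a y) := by
    intro y hy
    rcases hy with hy | hy
    · have hq : qf a y = R₀ ^ 2 := by rw [qf_eq_norm, hy]
      rw [hq, Real.log_pow]
      push_cast
      have : c₁ + c₂ * (2 * Real.log R₀) = G := by
        rw [hc₁, hc₂, hC]
        field_simp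
        ring
      rw [this]
      exact hin y hy
    · have hq : qf a y = r ^ 2 := by rw [qf_eq_norm, hy]
      rw [hq, Real.log_pow]
      push_cast
      have : c₁ + c₂ * (2 * Real.log r) = 0 := by
        rw [hc₁, hc₂]
        ring
      rw [this, hout y hy]
  have hub := comparison a hR₀ hrR c₁ c₂ u hcont hharm hbd
  have hux : u x = 0 := hout x hx
  have hqx : qf a x = r ^ 2 := by rw [qf_eq_norm, hx]
  set M : ℝ := ⟪p, x - a⟫ with hM
  have hbx : c₁ + c₂ * Real.log (qf a x) = 0 := by
    rw [hqx, Real.log_pow, hc₁, hc₂]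
    push_cast
    ring
  -- radial bound
  have hrad : 0 ≤ -M ∧ -M ≤ C := by
    have hv : ⟪x - a, -(x - a)⟫ ≤ 0 := by
      rw [inner_neg_right, real_inner_self_eq_norm_sq, hx]
      nlinarith
    obtain ⟨hA, hB⟩ := ray_bound' a hR₀ hrR hx hp hux h0 hub hbx _ hv
    rw [inner_neg_right] at hA hB
    rw [inner_neg_right, real_inner_self_eq_norm_sq, hx, hqx] at hB
    constructor
    · exact hA
    · have hr2ne : (r:ℝ) ^ 2 ≠ 0 := by positivity
      calc -M = -⟪p, x - a⟫ := by rw [hM]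
        _ ≤ c₂ * (2 * -r ^ 2 / r ^ 2) := hB
        _ = C := by rw [hc₂]; field_simp
  -- tangential component vanishes
  have htan : ⟪p, p - (M / r ^ 2) • (x - a)⟫ = 0 := by
    set τ : E2 := p - (M / r ^ 2) • (x - a) with hτ
    have hvτ : ⟪x - a, τ⟫ = 0 := by
      rw [hτ, inner_sub_right, real_inner_smul_right, real_inner_self_eq_norm_sq, hx,
        real_inner_comm, ← hM]
      field_simp; ring
    obtain ⟨hA, hB⟩ := ray_bound' a hR₀ hrR hx hp hux h0 hub hbx τ (le_of_eq hvτ)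
    rw [hvτ] at hB
    simp only [mul_zero, zero_div, zero_mul] at hB
    linarith
  have hnorm : ‖p‖ ^ 2 = M ^ 2 / r ^ 2 := by
    rw [inner_sub_right, real_inner_smul_right] at htan
    have h1 : ⟪p, p⟫ = ‖p‖ ^ 2 := real_inner_self_eq_norm_sq p
    rw [h1, ← hM] at htan
    have hr2ne : (r:ℝ) ^ 2 ≠ 0 := by positivity
    field_simp at htan ⊢
    linarith
  have hM2 : M ^ 2 ≤ C ^ 2 := by nlinarith [hrad.1, hrad.2]
  have hCle : C ≤ 2 * G / Real.log r := by
    rw [hC, div_le_div_iff₀ hden hlogr]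
    have h1 : 0 ≤ G * (Real.log r - 2 * Real.log R₀) :=
      mul_nonneg hG (by linarith)
    nlinarith
  have hC2 : C ^ 2 ≤ (2 * G / Real.log r) ^ 2 := pow_le_pow_left₀ hCpos hCle 2
  have hrpos2 : (0:ℝ) < r ^ 2 := by positivity
  calc ‖p‖ ^ 2 = M ^ 2 / r ^ 2 := hnorm
    _ ≤ C ^ 2 / r ^ 2 := by gcongr
    _ ≤ ((2 * G / Real.log r) ^ 2) / r ^ 2 := by gcongr
    _ = 4 * G ^ 2 / (r ^ 2 * Real.log r ^ 2) := by
        field_simp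
        ring
    _ ≤ (4 * G ^ 2 + 1) / (r ^ 2 * Real.log r ^ 2) := by
        gcongr
        linarith
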